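/- Let n_1 ≥ 2, n_1' ≥ 1 and let B_1, C_1ᵀ ∈ ℝ^{n_1 × n_1'} satisfy B_1 C_1 = A^{(n_1)}. Then for every integer ℓ ≥ 1 there exist matrices B_ℓ, C_ℓᵀ ∈ ℝ^{n_ℓ × n_ℓ'}, where n_ℓ = n_1^ℓ and n_ℓ' = n_1' · Σ_{k=0}^{ℓ-1} n_1^k, such that B_ℓ C_ℓ = A^{(n_ℓ)}, ‖B_ℓ‖_{2→∞} ≤ sqrt(ℓ) · ‖B_1‖_{2→∞}, and ‖C_ℓ‖_{1→2} = sqrt(ℓ) · ‖C_1‖_{1→2}. -/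

import Mathlib

/-- Maximum Euclidean row norm `‖M‖_{2→∞}`. -/
noncomputable def maxRowNorm {m n : Type*} [Fintype m] [Fintype n]
    (M : Matrix m n ℝ) : ℝ :=
  ⨆ i : m, Real.sqrt (∑ j, (M i j) ^ 2)

/-- Maximum Euclidean column norm `‖M‖_{1→2}`. -/
noncomputable def maxColNorm {m n : Type*} [Fintype m] [Fintype n]
    (M : Matrix m n ℝ) : ℝ :=
  ⨆ j : n, Real.sqrt (∑ i, (M i j) ^ 2)

/-- The `n × n` lower triangular all-ones matrix. -/
def allOnesLT (n : ℕ) : Matrix (Fin n) (Fin n) ℝ :=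
  Matrix.of fun i j => if (j : ℕ) ≤ (i : ℕ) then 1 else 0

lemma iSup_comp_equiv {α β : Type*} (e : α ≃ β) (f : β → ℝ) : (⨆ a, f (e a)) = ⨆ b, f b := by
  simp only [iSup]
  congr 1
  exact e.surjective.range_comp f

lemma maxRowNorm_submatrix {m n m' n' : Type*} [Fintype m] [Fintype n] [Fintype m'] [Fintype n']
    (M : Matrix m n ℝ) (e₁ : m' ≃ m) (e₂ : n' ≃ n) :
    maxRowNorm (M.submatrix e₁ e₂) = maxRowNorm M := by
  unfold maxRowNorm
  rw [← iSup_comp_equiv e₁ (fun i => Real.sqrt (∑ j, (M i j)^2))]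
  refine iSup_congr fun i => ?_
  congr 1
  exact Fintype.sum_equiv e₂ _ _ (fun j => rfl)

lemma maxColNorm_submatrix {m n m' n' : Type*} [Fintype m] [Fintype n] [Fintype m'] [Fintype n']
    (M : Matrix m n ℝ) (e₁ : m' ≃ m) (e₂ : n' ≃ n) :
    maxColNorm (M.submatrix e₁ e₂) = maxColNorm M := by
  unfold maxColNorm
  rw [← iSup_comp_equiv e₂ (fun j => Real.sqrt (∑ i, (M i j)^2))]
  refine iSup_congr fun j => ?_
  congr 1
  exact Fintype.sum_equiv e₁ _ _ (fun i => rfl)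

lemma maxRowNorm_nonneg {m n : Type*} [Fintype m] [Fintype n] (M : Matrix m n ℝ) :
    0 ≤ maxRowNorm M :=
  Real.iSup_nonneg fun _ => Real.sqrt_nonneg _

lemma maxColNorm_nonneg {m n : Type*} [Fintype m] [Fintype n] (M : Matrix m n ℝ) :
    0 ≤ maxColNorm M :=
  Real.iSup_nonneg fun _ => Real.sqrt_nonneg _

lemma sqrt_rowSum_le {m n : Type*} [Fintype m] [Fintype n] (M : Matrix m n ℝ) (i : m) :
    Real.sqrt (∑ j, (M i j)^2) ≤ maxRowNorm M := by
  unfold maxRowNorm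
  exact le_ciSup (Set.Finite.bddAbove (Set.finite_range
    (fun i => Real.sqrt (∑ j, (M i j)^2)))) i

lemma rowSum_le_sq {m n : Type*} [Fintype m] [Fintype n] (M : Matrix m n ℝ) (i : m) :
    ∑ j, (M i j)^2 ≤ (maxRowNorm M)^2 := by
  have h1 := sqrt_rowSum_le M i
  have h2 : 0 ≤ ∑ j, (M i j)^2 := Finset.sum_nonneg fun j _ => sq_nonneg _
  calc ∑ j, (M i j)^2 = (Real.sqrt (∑ j, (M i j)^2))^2 := (Real.sq_sqrt h2).symm
    _ ≤ (maxRowNorm M)^2 := pow_le_pow_left₀ (Real.sqrt_nonneg _) h1 2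

lemma maxRowNorm_le {m n : Type*} [Fintype m] [Fintype n] [Nonempty m] (M : Matrix m n ℝ)
    {c : ℝ} (h : ∀ i, Real.sqrt (∑ j, (M i j)^2) ≤ c) : maxRowNorm M ≤ c := by
  unfold maxRowNorm; exact ciSup_le h

lemma div_mod_le_iff {N : ℕ} (i j : ℕ) :
    j ≤ i ↔ j / N < i / N ∨ (j / N = i / N ∧ j % N ≤ i % N) := by
  constructor
  · intro h
    rcases lt_or_eq_of_le (Nat.div_le_div_right (c := N) h) with h' | h'
    · exact Or.inl h'
    · refine Or.inr ⟨h', ?_⟩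
      have e1 := Nat.div_add_mod i N
      have e2 := Nat.div_add_mod j N
      rw [h'] at e2
      exact le_of_add_le_add_left (a := N * (i / N)) (by rw [e2, e1]; exact h)
  · rintro (h | ⟨h, hm⟩)
    · by_contra hc
      push_neg at hc
      exact absurd (Nat.div_le_div_right (c := N) hc.le) (not_le.mpr h)
    · have e1 := Nat.div_add_mod i N
      have e2 := Nat.div_add_mod j N
      rw [h] at e2
      rw [← e1, ← e2]
      exact Nat.add_le_add_left hm _

lemma lex_ite_sum (a b c d e f : ℕ) (hlex : f ≤ e ↔ b < a ∨ (b = a ∧ d ≤ c)) :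
    ((if a = b then (if d ≤ c then (1 : ℝ) else 0) else 0) + (if b < a then 1 else 0))
      = if f ≤ e then 1 else 0 := by
  by_cases h : f ≤ e
  · rw [if_pos h]
    rw [hlex] at h
    rcases h with h | ⟨h, h'⟩
    · rw [if_neg (by omega : ¬ a = b), if_pos h]
      norm_num
    · rw [if_pos h.symm, if_pos h', if_neg (by omega : ¬ b < a)]
      norm_num
  · rw [if_neg h]
    rw [hlex] at h
    have h1 : ¬ b < a := fun x => h (Or.inl x)
    have h2 : ¬ (b = a ∧ d ≤ c) := fun x => h (Or.inr x)
    rw [if_neg h1]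
    by_cases hab : a = b
    · rw [if_pos hab, if_neg (fun hd => h2 ⟨hab.symm, hd⟩)]
      norm_num
    · rw [if_neg hab]
      norm_num

/-- Recursive factorization: from a base factorization `B₁ C₁ = A⁽ⁿ¹⁾` with
`B₁, C₁ᵀ ∈ ℝ^{n₁ × n₁'}`, for every `ℓ ≥ 1` there is a factorization
`B C = A^{(n₁^ℓ)}` with `B, Cᵀ ∈ ℝ^{n₁^ℓ × n₁' ∑_{k<ℓ} n₁^k}`,
`‖B‖_{2→∞} ≤ √ℓ ‖B₁‖_{2→∞}` and `‖C‖_{1→2} = √ℓ ‖C₁‖_{1→2}`. -/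
theorem recursive_factorization (n₁ n₁' : ℕ) (hn₁ : 2 ≤ n₁) (hn₁' : 1 ≤ n₁')
    (B₁ : Matrix (Fin n₁) (Fin n₁') ℝ) (C₁ : Matrix (Fin n₁') (Fin n₁) ℝ)
    (hBC : B₁ * C₁ = allOnesLT n₁) :
    ∀ ℓ : ℕ, 1 ≤ ℓ →
      ∃ (B : Matrix (Fin (n₁ ^ ℓ)) (Fin (n₁' * ∑ k ∈ Finset.range ℓ, n₁ ^ k)) ℝ)
        (C : Matrix (Fin (n₁' * ∑ k ∈ Finset.range ℓ, n₁ ^ k)) (Fin (n₁ ^ ℓ)) ℝ),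
        B * C = allOnesLT (n₁ ^ ℓ) ∧
        maxRowNorm B ≤ Real.sqrt ℓ * maxRowNorm B₁ ∧
        maxColNorm C = Real.sqrt ℓ * maxColNorm C₁ := by
  intro ℓ hℓ
  induction ℓ, hℓ using Nat.le_induction with
  | base =>
    have h1 : n₁ ^ 1 = n₁ := pow_one n₁
    have h2 : n₁' * ∑ k ∈ Finset.range 1, n₁ ^ k = n₁' := by simp
    refine ⟨B₁.submatrix (finCongr h1) (finCongr h2),
            C₁.submatrix (finCongr h2) (finCongr h1), ?_, ?_, ?_⟩
    · rw [Matrix.submatrix_mul_equiv, hBC]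
      ext i j
      rw [Matrix.submatrix_apply]
      simp only [allOnesLT, Matrix.of_apply, finCongr_apply, Fin.coe_cast]
    · rw [maxRowNorm_submatrix]
      simp
    · rw [maxColNorm_submatrix]
      simp
  | succ ℓ hℓ ih =>
    set N := n₁ ^ ℓ with hNdef
    set Mdim := n₁' * ∑ k ∈ Finset.range ℓ, n₁ ^ k with hMdef
    obtain ⟨B, C, hBCp, hBrow, hCcol⟩ := ih
    have hN : 0 < N := pow_pos (by omega) ℓ
    have hMpos : 0 < Mdim := by
      have : 0 < ∑ k ∈ Finset.range ℓ, n₁ ^ k :=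
        Finset.sum_pos (fun k _ => pow_pos (by omega) k)
          (Finset.nonempty_range_iff.mpr (by omega))
      exact Nat.mul_pos (by omega) this
    have hrow : n₁ ^ (ℓ + 1) = n₁ * N := by rw [hNdef, pow_succ]; ring
    have hcol : n₁' * ∑ k ∈ Finset.range (ℓ + 1), n₁ ^ k = n₁ * Mdim + n₁' := by
      rw [geom_sum_succ, hMdef]; ring
    haveI hne1 : Nonempty (Fin n₁) := ⟨⟨0, by omega⟩⟩
    haveI hne1' : Nonempty (Fin n₁') := ⟨⟨0, by omega⟩⟩
    haveI hneN : Nonempty (Fin N) := ⟨⟨0, hN⟩⟩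
    haveI hneM : Nonempty (Fin Mdim) := ⟨⟨0, hMpos⟩⟩
    -- the shifted matrix S
    set S : Matrix (Fin n₁) (Fin n₁') ℝ :=
      fun q c => if _h : (q : ℕ) = 0 then 0
        else B₁ ⟨(q : ℕ) - 1, lt_of_le_of_lt (Nat.sub_le _ _) q.isLt⟩ c with hSdef
    have hS : ∀ q q' : Fin n₁, (∑ c, S q c * C₁ c q') = if (q' : ℕ) < (q : ℕ) then 1 else 0 := by
      intro q q'
      by_cases h0 : (q : ℕ) = 0
      · simp [hSdef, h0, Nat.not_lt_zero]
      · have hq1 : (q : ℕ) - 1 < n₁ := lt_of_le_of_lt (Nat.sub_le _ _) q.isLt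
        have hentry := congrFun (congrFun hBC ⟨(q : ℕ) - 1, hq1⟩) q'
        rw [Matrix.mul_apply] at hentry
        simp only [hSdef, dif_neg h0]
        rw [hentry]
        simp only [allOnesLT, Matrix.of_apply]
        split_ifs with ha hb hb
        · rfl
        · omega
        · omega
        · rfl
    -- the big matrices over structured index types
    set Bb : Matrix (Fin n₁ × Fin N) ((Fin n₁ × Fin Mdim) ⊕ Fin n₁') ℝ :=
      fun p j => Sum.elim (fun a => if p.1 = a.1 then B p.2 a.2 else 0) (fun c => S p.1 c) j
      with hBb
    set Cc : Matrix ((Fin n₁ × Fin Mdim) ⊕ Fin n₁') (Fin n₁ × Fin N) ℝ :=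
      fun j p => Sum.elim (fun a => if a.1 = p.1 then C a.2 p.2 else 0) (fun c => C₁ c p.1) j
      with hCc
    have hprod : ∀ p p' : Fin n₁ × Fin N, (Bb * Cc) p p' =
        (if p.1 = p'.1 then (if ((p'.2 : ℕ) ≤ (p.2 : ℕ)) then (1 : ℝ) else 0) else 0)
        + (if ((p'.1 : ℕ) < (p.1 : ℕ)) then 1 else 0) := by
      intro p p'
      rw [Matrix.mul_apply, Fintype.sum_sum_type]
      congr 1
      · rw [Fintype.sum_prod_type]
        have key : ∀ a : Fin n₁, (∑ b : Fin Mdim,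
            (Bb p (Sum.inl (a, b))) * (Cc (Sum.inl (a, b)) p')) =
            if a = p.1 then (if p.1 = p'.1 then (B * C) p.2 p'.2 else 0) else 0 := by
          intro a
          by_cases h1 : a = p.1
          · by_cases h2 : p.1 = p'.1
            · rw [if_pos h1, if_pos h2, Matrix.mul_apply]
              refine Finset.sum_congr rfl fun b _ => ?_
              simp [hBb, hCc, h1.symm, h1.trans h2]
            · rw [if_pos h1, if_neg h2]
              refine Finset.sum_eq_zero fun b _ => ?_
              have hne : ¬ a = p'.1 := by rw [h1]; exact h2
              simp [hCc, hne]
          · rw [if_neg h1]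
            refine Finset.sum_eq_zero fun b _ => ?_
            have hne : ¬ p.1 = a := fun h => h1 h.symm
            simp [hBb, hne]
        rw [Finset.sum_congr rfl (fun a _ => key a), Finset.sum_ite_eq' Finset.univ p.1]
        simp [hBCp, allOnesLT]
      · have := hS p.1 p'.1
        simpa [hBb, hCc] using this
    -- reindexing equivalences
    let eR : Fin (n₁ ^ (ℓ + 1)) ≃ Fin n₁ × Fin N :=
      (finCongr hrow).trans finProdFinEquiv.symm
    let eC : Fin (n₁' * ∑ k ∈ Finset.range (ℓ + 1), n₁ ^ k) ≃ (Fin n₁ × Fin Mdim) ⊕ Fin n₁' :=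
      (finCongr hcol).trans (finSumFinEquiv.symm.trans
        (Equiv.sumCongr finProdFinEquiv.symm (Equiv.refl _)))
    have heR : ∀ x : Fin (n₁ ^ (ℓ + 1)),
        ((eR x).1 : ℕ) = (x : ℕ) / N ∧ ((eR x).2 : ℕ) = (x : ℕ) % N := by
      intro x
      constructor <;> rfl
    refine ⟨Bb.submatrix eR eC, Cc.submatrix eC eR, ?_, ?_, ?_⟩
    · rw [Matrix.submatrix_mul_equiv]
      ext i j
      rw [Matrix.submatrix_apply, hprod]
      obtain ⟨hi1, hi2⟩ := heR i
      obtain ⟨hj1, hj2⟩ := heR j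
      have hlex := div_mod_le_iff (N := N) (i : ℕ) (j : ℕ)
      show _ = allOnesLT _ i j
      simp only [allOnesLT, Matrix.of_apply, Fin.ext_iff, hi1, hi2, hj1, hj2]
      exact lex_ite_sum _ _ _ _ _ _ hlex
    · rw [maxRowNorm_submatrix]
      refine maxRowNorm_le _ fun p => ?_
      have hsum : ∑ j, (Bb p j)^2 = (∑ b, (B p.2 b)^2) + (∑ c, (S p.1 c)^2) := by
        rw [Fintype.sum_sum_type]
        congr 1
        rw [Fintype.sum_prod_type]
        have key : ∀ a : Fin n₁, (∑ b : Fin Mdim, (Bb p (Sum.inl (a, b)))^2) =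
            if a = p.1 then ∑ b, (B p.2 b)^2 else 0 := by
          intro a
          by_cases h1 : a = p.1
          · rw [if_pos h1]
            refine Finset.sum_congr rfl fun b _ => ?_
            simp [hBb, h1.symm]
          · rw [if_neg h1]
            refine Finset.sum_eq_zero fun b _ => ?_
            have hne : ¬ p.1 = a := fun h => h1 h.symm
            simp [hBb, hne]
        rw [Finset.sum_congr rfl (fun a _ => key a), Finset.sum_ite_eq' Finset.univ p.1]
        simp
      rw [hsum]
      have h1 : ∑ b, (B p.2 b)^2 ≤ (maxRowNorm B)^2 := rowSum_le_sq B p.2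
      have h2 : ∑ c, (S p.1 c)^2 ≤ (maxRowNorm B₁)^2 := by
        by_cases h0 : (p.1 : ℕ) = 0
        · have : ∑ c, (S p.1 c)^2 = 0 := by simp [hSdef, h0]
          rw [this]; positivity
        · have : ∑ c, (S p.1 c)^2 =
              ∑ c, (B₁ ⟨(p.1 : ℕ) - 1, lt_of_le_of_lt (Nat.sub_le _ _) p.1.isLt⟩ c)^2 := by
            simp [hSdef, h0]
          rw [this]
          exact rowSum_le_sq B₁ _
      have hb1 : 0 ≤ maxRowNorm B₁ := maxRowNorm_nonneg B₁
      have hB2 : (maxRowNorm B)^2 ≤ (ℓ : ℝ) * (maxRowNorm B₁)^2 := by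
        calc (maxRowNorm B)^2 ≤ (Real.sqrt ℓ * maxRowNorm B₁)^2 :=
              pow_le_pow_left₀ (maxRowNorm_nonneg B) hBrow 2
          _ = (ℓ : ℝ) * (maxRowNorm B₁)^2 := by
              rw [mul_pow, Real.sq_sqrt (by positivity)]
      calc Real.sqrt ((∑ b, (B p.2 b)^2) + (∑ c, (S p.1 c)^2))
          ≤ Real.sqrt ((ℓ : ℝ) * (maxRowNorm B₁)^2 + (maxRowNorm B₁)^2) :=
            Real.sqrt_le_sqrt (by linarith)
        _ = Real.sqrt (((ℓ : ℝ) + 1) * (maxRowNorm B₁)^2) := by ring_nf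
        _ = Real.sqrt ((ℓ : ℝ) + 1) * maxRowNorm B₁ := by
            rw [Real.sqrt_mul (by positivity), Real.sqrt_sq hb1]
        _ = Real.sqrt ((ℓ + 1 : ℕ) : ℝ) * maxRowNorm B₁ := by push_cast; ring_nf
    · rw [maxColNorm_submatrix]
      have hcsum : ∀ p : Fin n₁ × Fin N,
          ∑ jrow, (Cc jrow p)^2 = (∑ b, (C b p.2)^2) + (∑ c, (C₁ c p.1)^2) := by
        intro p
        rw [Fintype.sum_sum_type]
        congr 1
        rw [Fintype.sum_prod_type]
        have key : ∀ a : Fin n₁, (∑ b : Fin Mdim, (Cc (Sum.inl (a, b)) p)^2) =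
            if a = p.1 then ∑ b, (C b p.2)^2 else 0 := by
          intro a
          by_cases h1 : a = p.1
          · subst h1; simp [hCc]
          · simp [hCc, h1]
        rw [Finset.sum_congr rfl (fun a _ => key a), Finset.sum_ite_eq' Finset.univ p.1]
        simp
      obtain ⟨r₀, -, hr₀⟩ := Finset.exists_max_image Finset.univ
        (fun r : Fin N => ∑ b, (C b r)^2) Finset.univ_nonempty
      obtain ⟨q₀, -, hq₀⟩ := Finset.exists_max_image Finset.univ
        (fun q : Fin n₁ => ∑ c, (C₁ c q)^2) Finset.univ_nonempty
      have hx0 : Real.sqrt (∑ b, (C b r₀)^2) = maxColNorm C := by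
        apply le_antisymm
        · unfold maxColNorm
          exact le_ciSup (Set.Finite.bddAbove (Set.finite_range
            (fun r => Real.sqrt (∑ b, (C b r)^2)))) r₀
        · unfold maxColNorm
          exact ciSup_le fun r => Real.sqrt_le_sqrt (hr₀ r (Finset.mem_univ r))
      have hy0 : Real.sqrt (∑ c, (C₁ c q₀)^2) = maxColNorm C₁ := by
        apply le_antisymm
        · unfold maxColNorm
          exact le_ciSup (Set.Finite.bddAbove (Set.finite_range
            (fun q => Real.sqrt (∑ c, (C₁ c q)^2)))) q₀
        · unfold maxColNorm
          exact ciSup_le fun q => Real.sqrt_le_sqrt (hq₀ q (Finset.mem_univ q))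
      have hmax : maxColNorm Cc = Real.sqrt ((∑ b, (C b r₀)^2) + (∑ c, (C₁ c q₀)^2)) := by
        unfold maxColNorm
        apply le_antisymm
        · refine ciSup_le fun p => ?_
          rw [hcsum p]
          exact Real.sqrt_le_sqrt
            (add_le_add (hr₀ p.2 (Finset.mem_univ _)) (hq₀ p.1 (Finset.mem_univ _)))
        · have hle := le_ciSup (Set.Finite.bddAbove (Set.finite_range
            (fun p : Fin n₁ × Fin N => Real.sqrt (∑ jrow, (Cc jrow p)^2)))) (q₀, r₀)
          rw [hcsum (q₀, r₀)] at hle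
          exact hle
      have hC1 : 0 ≤ maxColNorm C₁ := maxColNorm_nonneg C₁
      have hxval : (∑ b, (C b r₀)^2) = (ℓ : ℝ) * (maxColNorm C₁)^2 := by
        have heq : Real.sqrt (∑ b, (C b r₀)^2) = Real.sqrt ℓ * maxColNorm C₁ :=
          hx0.trans hCcol
        have hx : 0 ≤ ∑ b, (C b r₀)^2 := Finset.sum_nonneg fun _ _ => sq_nonneg _
        have := congrArg (· ^ 2) heq
        simpa [Real.sq_sqrt hx, mul_pow, Real.sq_sqrt (show (0:ℝ) ≤ (ℓ:ℝ) by positivity)]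
          using this
      have hyval : (∑ c, (C₁ c q₀)^2) = (maxColNorm C₁)^2 := by
        have hy : 0 ≤ ∑ c, (C₁ c q₀)^2 := Finset.sum_nonneg fun _ _ => sq_nonneg _
        have := congrArg (· ^ 2) hy0
        simpa [Real.sq_sqrt hy] using this
      rw [hmax, hxval, hyval,
        show (ℓ : ℝ) * (maxColNorm C₁)^2 + (maxColNorm C₁)^2
          = ((ℓ : ℝ) + 1) * (maxColNorm C₁)^2 by ring,
        Real.sqrt_mul (by positivity), Real.sqrt_sq hC1]
      push_cast
      ring_nf
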